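/- Let M be a manifold and let W ⊆ Homeo(M) be a symmetric countably syndetic subset witnessed by a covering Homeo(M) = ⋃_m k_m W. Suppose C ⊆ M is closed and (A_m) is a sequence of pairwise disjoint closed subsets of C such that for every sequence (g_m) of homeomorphisms with supp(g_m) ⊆ A_m there exists g ∈ Homeo(M) with supp(g) ⊆ C agreeing with g_m on A_m for all m. Then there exists m₀ such that every g ∈ Homeo(M) with supp(g) ⊆ A_{m₀} satisfies: there is h ∈ W² with supp(h) ⊆ C and g|A_{m₀} = h|A_{m₀}. -/

import Mathlib

open Pointwise Set Topology

noncomputable instance homeoGroup (X : Type*) [TopologicalSpace X] : Group (X ≃ₜ X) where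
  mul f g := g.trans f
  one := Homeomorph.refl X
  inv := Homeomorph.symm
  mul_assoc _ _ _ := rfl
  one_mul f := by ext x; rfl
  mul_one f := by ext x; rfl
  inv_mul_cancel f := by ext x; exact f.symm_apply_apply x

/-- If homeomorphisms supported on the pairwise disjoint closed sets `A m ⊆ C` can be
glued to one supported in `C`, then for some `m₀` every homeomorphism supported in
`A m₀` agrees on `A m₀` with some element of `W²` supported in `C`. -/
theorem syndetic_patching (n : ℕ) (M : Type*) [TopologicalSpace M] [T2Space M]
    [ChartedSpace (EuclideanSpace ℝ (Fin n)) M]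
    (W : Set (M ≃ₜ M)) (hsym : W⁻¹ = W)
    (k : ℕ → M ≃ₜ M) (hcov : (⋃ m, k m • W) = Set.univ)
    (C : Set M) (hC : IsClosed C)
    (A : ℕ → Set M) (hAC : ∀ m, A m ⊆ C) (hAcl : ∀ m, IsClosed (A m))
    (hdisj : Pairwise (Function.onFun Disjoint A))
    (hglue : ∀ g : ℕ → M ≃ₜ M, (∀ m, closure {x | g m x ≠ x} ⊆ A m) →
      ∃ G : M ≃ₜ M, closure {x | G x ≠ x} ⊆ C ∧ ∀ m, Set.EqOn (⇑G) (⇑(g m)) (A m)) :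
    ∃ m₀ : ℕ, ∀ g : M ≃ₜ M, closure {x | g x ≠ x} ⊆ A m₀ →
      ∃ h ∈ W * W, closure {x | h x ≠ x} ⊆ C ∧ Set.EqOn (⇑g) (⇑h) (A m₀) := by
  classical
  by_contra hcon
  push_neg at hcon
  choose g hg hbad using hcon
  -- glue families indexed by subsets of ℕ
  set gε : Set ℕ → ℕ → M ≃ₜ M := fun ε m => if m ∈ ε then g m else 1 with hgεdef
  have hgε : ∀ ε m, closure {x | gε ε m x ≠ x} ⊆ A m := by
    intro ε m
    by_cases hm : m ∈ ε
    · simpa [gε, hm] using hg m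
    · have : {x | gε ε m x ≠ x} = (∅ : Set M) := by
        ext x
        simp only [gε, hm, if_neg, mem_setOf_eq, mem_empty_iff_false, iff_false, not_not]
        rfl
      rw [this]; simp
  choose G hGC hGeq using fun ε => hglue (gε ε) (hgε ε)
  have hGmem : ∀ ε, ∃ j, G ε ∈ k j • W := by
    intro ε
    have : G ε ∈ ⋃ m, k m • W := by rw [hcov]; exact mem_univ _
    simpa using this
  choose j hj using hGmem
  have key : ∀ ε ε' : Set ℕ, j ε = j ε' → ∀ m₀, m₀ ∈ ε → m₀ ∉ ε' → False := by
    intro ε ε' hjj m₀ hmε hmε'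
    obtain ⟨w, hw, hwe⟩ := hj ε
    obtain ⟨w', hw', hwe'⟩ := hj ε'
    set h := (G ε')⁻¹ * G ε with hh
    have hhW : h ∈ W * W := by
      have heq : h = w'⁻¹ * w := by
        rw [hh, ← hwe, ← hwe', hjj]
        simp only [smul_eq_mul]
        group
      rw [heq]
      exact Set.mul_mem_mul (by rw [← hsym]; exact Set.inv_mem_inv.mpr hw') hw
    have hsubset : {x | h x ≠ x} ⊆ {x | G ε x ≠ x} ∪ {x | G ε' x ≠ x} := by
      intro x hx
      by_contra hc
      simp only [mem_union, mem_setOf_eq, not_or, not_not] at hc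
      apply hx
      show (G ε').symm (G ε x) = x
      rw [hc.1]
      exact (G ε').symm_apply_eq.mpr hc.2.symm
    have hclos : closure {x | h x ≠ x} ⊆ C := by
      refine (closure_mono hsubset).trans ?_
      rw [closure_union]
      exact union_subset (hGC ε) (hGC ε')
    have hhx : ∀ x ∈ A m₀, h x = g m₀ x := by
      intro x hx
      have h1 : G ε x = g m₀ x := by
        have := hGeq ε m₀ hx
        rw [this]; simp [gε, hmε]
      have hmem : g m₀ x ∈ A m₀ := by
        by_cases hfix : g m₀ x = x
        · rwa [hfix]
        · refine hg m₀ (subset_closure ?_)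
          show g m₀ (g m₀ x) ≠ g m₀ x
          intro hcontra
          exact hfix ((g m₀).injective hcontra)
      have h2 : G ε' (g m₀ x) = g m₀ x := by
        have := hGeq ε' m₀ hmem
        rw [this]
        simp only [gε, hmε', if_neg]
        rfl
      show (G ε').symm (G ε x) = g m₀ x
      rw [h1]
      exact (G ε').symm_apply_eq.mpr h2.symm
    exact hbad m₀ h hhW hclos (fun x hx => (hhx x hx).symm)
  obtain ⟨ε, ε', hjj, hne⟩ := Function.not_injective_iff.mp (Function.cantor_injective j)
  obtain ⟨m₀, hm₀⟩ : ∃ m₀, ¬(m₀ ∈ ε ↔ m₀ ∈ ε') := by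
    by_contra hall
    push_neg at hall
    exact hne (Set.ext fun m => hall m)
  rw [iff_iff_implies_and_implies, not_and_or] at hm₀
  rcases hm₀ with h1 | h1
  · push_neg at h1
    exact key ε ε' hjj m₀ h1.1 h1.2
  · push_neg at h1
    exact key ε' ε hjj.symm m₀ h1.1 h1.2
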